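/- Under the hypotheses of the symmetrized Schlesinger system (L_m B_n = Σ_{k=1}^{n-1}[B_k,B_{m+n-k}] + n B_{m+n}, B_0 = 0), the modified Hamiltonians Ĥ_n := -(1/4) Σ_{k=0}^n tr(B_k B_{n-k}) satisfy L_m Ĥ_n - L_n Ĥ_m = (n-m) Ĥ_{m+n} for all m, n ≥ -1. -/

import Mathlib

open Matrix

section Helpers

/-- Cancellation of the double commutator sum via trace cyclicity. -/
private lemma comm_cancel {M : ℕ} (m n : ℤ) (b : ℤ → Matrix (Fin M) (Fin M) ℂ) :
    ∑ k ∈ Finset.Icc 1 (n-1), ∑ j ∈ Finset.Icc 1 (k-1),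
      ((b j * b (m+k-j) - b (m+k-j) * b j) * b (n-k)).trace = 0 := by
  rw [Finset.sum_sigma']
  set S := (Finset.Icc 1 (n-1)).sigma (fun k => Finset.Icc 1 (k-1)) with hS
  have key : ∑ p ∈ S, ((b p.2 * b (m+p.1-p.2) - b (m+p.1-p.2) * b p.2) * b (n-p.1)).trace
      = ∑ p ∈ S, (-(((b p.2 * b (m+p.1-p.2) - b (m+p.1-p.2) * b p.2) * b (n-p.1)).trace)) := by
    apply Finset.sum_nbij' (i := fun p : (_ : ℤ) × ℤ => (⟨n - p.2, n - p.1⟩ : (_ : ℤ) × ℤ))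
      (j := fun p : (_ : ℤ) × ℤ => (⟨n - p.2, n - p.1⟩ : (_ : ℤ) × ℤ))
    · intro p hp
      simp only [hS, Finset.mem_sigma, Finset.mem_Icc] at hp ⊢
      omega
    · intro p hp
      simp only [hS, Finset.mem_sigma, Finset.mem_Icc] at hp ⊢
      omega
    · intro p hp; simp
    · intro p hp; simp
    · intro p hp
      obtain ⟨k, j⟩ := p
      simp only
      have e1 : m + (n - j) - (n - k) = m + k - j := by ring
      have e2 : n - (n - j) = j := by ring
      rw [e1, e2]
      rw [sub_mul, sub_mul, trace_sub, trace_sub,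
        Matrix.trace_mul_cycle (b j) (b (m+k-j)) (b (n-k)),
        Matrix.trace_mul_cycle (b (n-k)) (b j) (b (m+k-j)),
        Matrix.trace_mul_cycle (b (m+k-j)) (b j) (b (n-k))]
      ring
  rw [Finset.sum_neg_distrib] at key
  linear_combination key / 2

private lemma comb_aux (m n : ℤ) (hm : -1 ≤ m) (hn : -1 ≤ n) (f : ℤ → ℤ → ℂ)
    (hsym : ∀ a b, f a b = f b a) (hzero : ∀ b, f 0 b = 0) :
    (∑ k ∈ Finset.Icc 1 (n-1), (k:ℂ) * f (m+k) (n-k)) -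
      (∑ k ∈ Finset.Icc 1 (m-1), (k:ℂ) * f (n+k) (m-k))
    = ((n - m : ℤ):ℂ)/2 * ∑ k ∈ Finset.Icc 0 (m+n), f k (m+n-k) := by
  have stepA : (∑ k ∈ Finset.Icc 1 (n-1), (k:ℂ) * f (m+k) (n-k))
      = ∑ j ∈ Finset.Icc (m+1) (m+n-1), ((j - m : ℤ):ℂ) * f j (m+n-j) := by
    apply Finset.sum_nbij' (i := fun k => m + k) (j := fun j => j - m)
    · intro a ha; simp only [Finset.mem_Icc] at ha ⊢; omega
    · intro a ha; simp only [Finset.mem_Icc] at ha ⊢; omega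
    · intro a _; ring
    · intro a _; ring
    · intro a _
      have e1 : m + a - m = a := by ring
      have e2 : m + n - (m + a) = n - a := by ring
      rw [e1, e2]
  have stepB : (∑ k ∈ Finset.Icc 1 (m-1), (k:ℂ) * f (n+k) (m-k))
      = ∑ j ∈ Finset.Icc 1 (m-1), ((m - j : ℤ):ℂ) * f j (m+n-j) := by
    apply Finset.sum_nbij' (i := fun k => m - k) (j := fun j => m - j)
    · intro a ha; simp only [Finset.mem_Icc] at ha ⊢; omega
    · intro a ha; simp only [Finset.mem_Icc] at ha ⊢; omega
    · intro a _; ring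
    · intro a _; ring
    · intro a _
      have e1 : m - (m - a) = a := by ring
      have e2 : m + n - (m - a) = n + a := by ring
      rw [e1, e2, hsym]
  have hBneg : (∑ j ∈ Finset.Icc 1 (m-1), ((m - j : ℤ):ℂ) * f j (m+n-j))
      = - ∑ j ∈ Finset.Icc 1 (m-1), ((j - m : ℤ):ℂ) * f j (m+n-j) := by
    rw [← Finset.sum_neg_distrib]
    apply Finset.sum_congr rfl
    intro j _
    push_cast
    ring
  have hdisj : Disjoint (Finset.Icc (m+1) (m+n-1)) (Finset.Icc 1 (m-1)) := by
    rw [Finset.disjoint_left]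
    intro a ha hb
    simp only [Finset.mem_Icc] at ha hb
    omega
  have stepC : ∑ j ∈ Finset.Icc (m+1) (m+n-1), ((j - m : ℤ):ℂ) * f j (m+n-j)
      + ∑ j ∈ Finset.Icc 1 (m-1), ((j - m : ℤ):ℂ) * f j (m+n-j)
      = ∑ j ∈ Finset.Icc 0 (m+n), ((j - m : ℤ):ℂ) * f j (m+n-j) := by
    rw [← Finset.sum_union hdisj]
    apply Finset.sum_subset
    · intro a ha
      simp only [Finset.mem_union, Finset.mem_Icc] at ha ⊢
      omega
    · intro a ha ha'
      simp only [Finset.mem_union, Finset.mem_Icc] at ha ha'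
      have : a = 0 ∨ a = m ∨ a = m + n := by omega
      rcases this with h | h | h
      · subst h; rw [hzero]; ring
      · subst h; simp
      · subst h
        have : m + n - (m + n) = 0 := by ring
        rw [this, hsym, hzero]; ring
  have stepD : ∑ j ∈ Finset.Icc 0 (m+n), ((j - m : ℤ):ℂ) * f j (m+n-j)
      = ∑ j ∈ Finset.Icc 0 (m+n), ((n - j : ℤ):ℂ) * f j (m+n-j) := by
    apply Finset.sum_nbij' (i := fun j => m + n - j) (j := fun j => m + n - j)
    · intro a ha; simp only [Finset.mem_Icc] at ha ⊢; omega
    · intro a ha; simp only [Finset.mem_Icc] at ha ⊢; omega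
    · intro a _; ring
    · intro a _; ring
    · intro a _
      have e1 : m + n - (m + n - a) = a := by ring
      rw [e1, hsym]
      have e2 : ((n - (m + n - a) : ℤ):ℂ) = ((a - m : ℤ):ℂ) := by push_cast; ring
      rw [e2]
  rw [stepA, stepB, hBneg, sub_neg_eq_add, stepC]
  have key2 : (2:ℂ) * ∑ j ∈ Finset.Icc 0 (m+n), ((j - m : ℤ):ℂ) * f j (m+n-j)
      = ((n - m : ℤ):ℂ) * ∑ j ∈ Finset.Icc 0 (m+n), f j (m+n-j) := by
    rw [two_mul]
    nth_rewrite 2 [stepD]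
    rw [Finset.mul_sum, ← Finset.sum_add_distrib]
    apply Finset.sum_congr rfl
    intro j _
    push_cast
    ring
  linear_combination key2 / 2

end Helpers

/-- Under the symmetrized Schlesinger system with `B_0 = 0`, the modified Hamiltonians
`Ĥ_n := -(1/4) ∑_{k=0}^n tr(B_k B_{n-k})` satisfy
`L_m Ĥ_n - L_n Ĥ_m = (n - m) Ĥ_{m+n}` for all `m, n ≥ -1`. -/
theorem hamiltonian_commutation {X : Type*} (M : ℕ)
    (B : ℤ → X → Matrix (Fin M) (Fin M) ℂ) (hB0 : B 0 = 0)
    (Lm : ℤ → (X → Matrix (Fin M) (Fin M) ℂ) →ₗ[ℂ] (X → Matrix (Fin M) (Fin M) ℂ))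
    (Ls : ℤ → (X → ℂ) →ₗ[ℂ] (X → ℂ))
    (hLeib : ∀ m : ℤ, -1 ≤ m → ∀ F G : X → Matrix (Fin M) (Fin M) ℂ,
      Lm m (F * G) = Lm m F * G + F * Lm m G)
    (hTr : ∀ m : ℤ, -1 ≤ m → ∀ F : X → Matrix (Fin M) (Fin M) ℂ,
      Ls m (fun x => (F x).trace) = fun x => ((Lm m F) x).trace)
    (hSch : ∀ m n : ℤ, -1 ≤ m → 1 ≤ n →
      Lm m (B n) = (∑ k ∈ Finset.Icc 1 (n - 1),
          (B k * B (m + n - k) - B (m + n - k) * B k)) + (n : ℂ) • B (m + n))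
    (H : ℤ → X → ℂ)
    (hH : ∀ n, H n = fun x => -(1/4 : ℂ) * ∑ k ∈ Finset.Icc 0 n, (B k x * B (n - k) x).trace) :
    ∀ m n : ℤ, -1 ≤ m → -1 ≤ n →
      Ls m (H n) - Ls n (H m) = ((n - m : ℤ) : ℂ) • H (m + n) := by
  have key : ∀ m n : ℤ, -1 ≤ m → -1 ≤ n →
      Ls m (H n) = fun x => (-(1/2) : ℂ) * ∑ k ∈ Finset.Icc 1 (n-1),
        (k:ℂ) * (B (m+k) x * B (n-k) x).trace := by
    intro m n hm hn
    have h1 : H n = (-(1/4):ℂ) • ∑ k ∈ Finset.Icc 0 n,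
        (fun x => ((B k * B (n-k)) x).trace : X → ℂ) := by
      rw [hH n]
      funext x
      simp only [Pi.smul_apply, Finset.sum_apply, smul_eq_mul, Pi.mul_apply]
    rw [h1, _root_.map_smul, map_sum]
    funext x
    simp only [Pi.smul_apply, Finset.sum_apply, smul_eq_mul]
    have h2 : ∀ k, (Ls m (fun x => ((B k * B (n-k)) x).trace)) x
        = ((Lm m (B k)) x * B (n-k) x).trace + (B k x * (Lm m (B (n-k))) x).trace := by
      intro k
      rw [hTr m hm, hLeib m hm]
      simp only [Pi.add_apply, Pi.mul_apply, trace_add]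
    rw [Finset.sum_congr rfl (fun k _ => h2 k), Finset.sum_add_distrib]
    have h3 : ∑ k ∈ Finset.Icc 0 n, (B k x * (Lm m (B (n-k))) x).trace
        = ∑ k ∈ Finset.Icc 0 n, ((Lm m (B k)) x * B (n-k) x).trace := by
      apply Finset.sum_nbij' (i := fun k => n - k) (j := fun k => n - k)
      · intro a ha; simp only [Finset.mem_Icc] at ha ⊢; omega
      · intro a ha; simp only [Finset.mem_Icc] at ha ⊢; omega
      · intro a _; ring
      · intro a _; ring
      · intro a _
        rw [trace_mul_comm]
        have e1 : n - (n - a) = a := by ring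
        rw [e1]
    rw [h3]
    have h4 : ∑ k ∈ Finset.Icc 0 n, ((Lm m (B k)) x * B (n-k) x).trace
        = ∑ k ∈ Finset.Icc 1 (n-1), ((Lm m (B k)) x * B (n-k) x).trace := by
      symm
      apply Finset.sum_subset
      · intro a ha; simp only [Finset.mem_Icc] at ha ⊢; omega
      · intro a ha ha'
        simp only [Finset.mem_Icc] at ha ha'
        have hcase : a = 0 ∨ a = n := by omega
        rcases hcase with h | h
        · rw [h, hB0, map_zero]
          simp
        · have e : n - a = 0 := by omega
          rw [e, hB0]
          simp
    rw [h4]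
    have h5 : ∀ k ∈ Finset.Icc 1 (n-1), ((Lm m (B k)) x * B (n-k) x).trace
        = (∑ j ∈ Finset.Icc 1 (k-1),
            ((B j x * B (m+k-j) x - B (m+k-j) x * B j x) * B (n-k) x).trace)
          + (k:ℂ) * (B (m+k) x * B (n-k) x).trace := by
      intro k hk
      simp only [Finset.mem_Icc] at hk
      rw [hSch m k hm hk.1]
      simp only [Pi.add_apply, Finset.sum_apply, Pi.smul_apply, Pi.mul_apply, Pi.sub_apply]
      rw [add_mul, Finset.sum_mul, trace_add, trace_sum, smul_mul_assoc, trace_smul,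
        smul_eq_mul]
    rw [Finset.sum_congr rfl h5, Finset.sum_add_distrib,
      comm_cancel m n (fun i => B i x), zero_add]
    ring
  intro m n hm hn
  rw [key m n hm hn, key n m hn hm, hH (m+n)]
  funext x
  simp only [Pi.sub_apply, Pi.smul_apply, smul_eq_mul]
  have hc := comb_aux m n hm hn (fun a b => (B a x * B b x).trace)
    (fun a b => trace_mul_comm (B a x) (B b x))
    (fun b => by show (B 0 x * B b x).trace = 0; rw [hB0]; simp)
  beta_reduce at hc
  linear_combination (-(1/2) : ℂ) * hc
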